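/- arXiv:2306.05211 — 4 statements merged into one kernel-verified Lean document; each statement's English description precedes it below -/
import Mathlib

section
/- Let X be a finite set, f, h : X → {-1,1}, and let d be a distribution on X such that both Σ_{x: f(x)=1} d_x > 0 and Σ_{x: f(x)=-1} d_x > 0. Let d̄ be the balanced distribution of d with respect to f. If γ ∈ [0,1] and edge_{d̄,f}(h) = Σ_{x∈X} d̄_x f(x) h(x) ≥ γ, then H_d(f|h) ≤ (1 - γ²/2) · H_d(f). -/
/-- The pseudo-entropy function `G(q) = 2√(q(1-q))`. -/
noncomputable def G (q : ℝ) : ℝ := 2 * Real.sqrt (q * (1 - q))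

set_option maxHeartbeats 1000000 in
lemma core_ineq (u v γ : ℝ) (hu0 : 0 ≤ u) (hu1 : u ≤ 1) (hv0 : 0 ≤ v) (hv1 : v ≤ 1)
    (hγ0 : 0 ≤ γ) (hγ1 : γ ≤ 1) (hγuv : γ ≤ u - v) :
    Real.sqrt (u*v) + Real.sqrt ((1-u)*(1-v)) ≤ 1 - γ^2/2 := by
  have hx0 : 0 ≤ u*(1-v) := mul_nonneg hu0 (by linarith)
  have hy0 : 0 ≤ v*(1-u) := mul_nonneg hv0 (by linarith)
  have huv0 : 0 ≤ u*v := mul_nonneg hu0 hv0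
  have hw0 : 0 ≤ (1-u)*(1-v) := mul_nonneg (by linarith) (by linarith)
  set sx := Real.sqrt (u*(1-v)) with hsxd
  set sy := Real.sqrt (v*(1-u)) with hsyd
  set su := Real.sqrt (u*v) with hsud
  set sw := Real.sqrt ((1-u)*(1-v)) with hswd
  have hsx : sx^2 = u*(1-v) := Real.sq_sqrt hx0
  have hsy : sy^2 = v*(1-u) := Real.sq_sqrt hy0
  have hsu : su^2 = u*v := Real.sq_sqrt huv0
  have hsw : sw^2 = (1-u)*(1-v) := Real.sq_sqrt hw0
  have hsx0 : 0 ≤ sx := Real.sqrt_nonneg _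
  have hsy0 : 0 ≤ sy := Real.sqrt_nonneg _
  have hsu0 : 0 ≤ su := Real.sqrt_nonneg _
  have hsw0 : 0 ≤ sw := Real.sqrt_nonneg _
  have hprod : sx*sy = su*sw := by
    rw [hsxd, hsyd, hsud, hswd, ← Real.sqrt_mul hx0, ← Real.sqrt_mul huv0,
      show u*(1-v)*(v*(1-u)) = u*v*((1-u)*(1-v)) from by ring]
  have hE1 : sx + sy ≤ 1 := by
    nlinarith [sq_nonneg (su - sw), sq_nonneg (sx + sy - 1), sq_nonneg (sx + sy + 1)]
  have hyx : sy ≤ sx := Real.sqrt_le_sqrt (by nlinarith)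
  have hDγ : γ ≤ sx - sy := by
    nlinarith [mul_nonneg (sub_nonneg.2 hyx) (sub_nonneg.2 hE1)]
  have hS2 : (su + sw)^2 ≤ 1 - γ^2 := by
    nlinarith [mul_self_le_mul_self hγ0 hDγ]
  nlinarith [add_nonneg hsu0 hsw0, sq_nonneg γ, sq_nonneg (γ^2), sq_nonneg (su + sw - (1 - γ^2/2))]

lemma pG_eq (p s : ℝ) (hp : 0 ≤ p) (hs : 0 ≤ s) (hsp : s ≤ p) :
    p * G (s / p) = 2 * Real.sqrt (s * (p - s)) := by
  rcases eq_or_lt_of_le hp with hp0 | hp0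
  · have hs0 : s = 0 := le_antisymm (hp0 ▸ hsp) hs
    simp [← hp0, hs0, G]
  · have hne : p ≠ 0 := ne_of_gt hp0
    have key : s / p * (1 - s / p) = s * (p - s) / p^2 := by
      rw [show (1 : ℝ) - s/p = (p - s)/p from by rw [sub_div, div_self hne],
        div_mul_div_comm, sq]
    rw [G, key, Real.sqrt_div (mul_nonneg hs (by linarith)), Real.sqrt_sq (le_of_lt hp0),
      mul_comm p, mul_assoc, div_mul_cancel₀ _ hne]

/-- The entropy `H_d(f) = G(Σ_{x : f x = 1} d x)` of `f` with respect to a distribution `d`. -/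
noncomputable def entropy {X : Type*} [Fintype X] (d f : X → ℝ) : ℝ :=
  G (∑ x ∈ Finset.univ.filter (fun x => f x = 1), d x)

/-- The conditional entropy `H_d(f|h) = p⁺·G(q⁺) + p⁻·G(q⁻)` of `f` given `h` with respect to a
distribution `d`, where `p^± = Σ_{x : h x = ±1} d x` and
`q^± = (Σ_{x : f x = 1 ∧ h x = ±1} d x)/p^±` (in Lean a term with `p^± = 0` is `0`,
since division by zero is zero and `G 0 = 0`). -/
noncomputable def condEntropy {X : Type*} [Fintype X] (d f h : X → ℝ) : ℝ :=
  (∑ x ∈ Finset.univ.filter (fun x => h x = 1), d x) *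
    G ((∑ x ∈ Finset.univ.filter (fun x => f x = 1 ∧ h x = 1), d x) /
       (∑ x ∈ Finset.univ.filter (fun x => h x = 1), d x)) +
  (∑ x ∈ Finset.univ.filter (fun x => h x = -1), d x) *
    G ((∑ x ∈ Finset.univ.filter (fun x => f x = 1 ∧ h x = -1), d x) /
       (∑ x ∈ Finset.univ.filter (fun x => h x = -1), d x))

set_option maxHeartbeats 1000000 in
/-- if the balanced distribution `d̄` of `d` with respect to `f` gives `h` an
edge of at least `γ ∈ [0,1]`, then `H_d(f|h) ≤ (1 - γ²/2)·H_d(f)`. -/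
theorem stmt3 {X : Type*} [Fintype X]
    (f h : X → ℝ) (hf : ∀ x, f x = 1 ∨ f x = -1) (hh : ∀ x, h x = 1 ∨ h x = -1)
    (d : X → ℝ) (hd0 : ∀ x, 0 ≤ d x) (hd1 : ∑ x, d x = 1)
    (hpos : 0 < ∑ x ∈ Finset.univ.filter (fun x => f x = 1), d x)
    (hneg : 0 < ∑ x ∈ Finset.univ.filter (fun x => f x = -1), d x)
    (dbar : X → ℝ)
    (hdbar : ∀ x, dbar x =
      d x / (2 * ∑ x' ∈ Finset.univ.filter (fun x' => f x' = f x), d x'))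
    (γ : ℝ) (hγ : γ ∈ Set.Icc (0 : ℝ) 1)
    (hedge : γ ≤ ∑ x, dbar x * f x * h x) :
    condEntropy d f h ≤ (1 - γ^2/2) * entropy d f := by
  classical
  have hfne : ∀ x : X, (f x = -1) ↔ ¬ (f x = 1) := by
    intro x; rcases hf x with h' | h' <;> rw [h'] <;> norm_num
  have hhne : ∀ x : X, (h x = -1) ↔ ¬ (h x = 1) := by
    intro x; rcases hh x with h' | h' <;> rw [h'] <;> norm_num
  set a := ∑ x ∈ Finset.univ.filter (fun x => f x = 1), d x with ha_def
  set b := ∑ x ∈ Finset.univ.filter (fun x => f x = -1), d x with hb_def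
  set A := ∑ x ∈ Finset.univ.filter (fun x => f x = 1 ∧ h x = 1), d x with hA_def
  set A' := ∑ x ∈ Finset.univ.filter (fun x => f x = 1 ∧ h x = -1), d x with hA'_def
  set B := ∑ x ∈ Finset.univ.filter (fun x => f x = -1 ∧ h x = 1), d x with hB_def
  set B' := ∑ x ∈ Finset.univ.filter (fun x => f x = -1 ∧ h x = -1), d x with hB'_def
  -- filter identities
  have efneg : Finset.univ.filter (fun x => f x = -1)
      = Finset.univ.filter (fun x => ¬ f x = 1) :=
    Finset.filter_congr fun x _ => by rw [hfne x]
  have esplit : ∀ (p : X → Prop) [DecidablePred p] (g : X → ℝ),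
      ∑ x ∈ Finset.univ.filter p, g x
        = ∑ x ∈ Finset.univ.filter (fun x => p x ∧ h x = 1), g x
          + ∑ x ∈ Finset.univ.filter (fun x => p x ∧ h x = -1), g x := by
    intro p _ g
    rw [← Finset.sum_filter_add_sum_filter_not (Finset.univ.filter p) (fun x => h x = 1) g,
      Finset.filter_filter, Finset.filter_filter]
    congr 2
    exact Finset.filter_congr fun x _ => and_congr_right fun _ => (hhne x).symm
  have hab : a + b = 1 := by
    rw [ha_def, hb_def, efneg, Finset.sum_filter_add_sum_filter_not, hd1]
  have hAa : A + A' = a := (esplit (fun x => f x = 1) d).symm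
  have hBb : B + B' = b := (esplit (fun x => f x = -1) d).symm
  -- h-filter sums
  have ehsplit : ∀ (c : ℝ),
      ∑ x ∈ Finset.univ.filter (fun x => h x = c), d x
        = ∑ x ∈ Finset.univ.filter (fun x => f x = 1 ∧ h x = c), d x
          + ∑ x ∈ Finset.univ.filter (fun x => f x = -1 ∧ h x = c), d x := by
    intro c
    rw [← Finset.sum_filter_add_sum_filter_not (Finset.univ.filter (fun x => h x = c))
      (fun x => f x = 1) d, Finset.filter_filter, Finset.filter_filter]
    congr 1
    · exact Finset.sum_congr (Finset.filter_congr fun x _ => and_comm) fun _ _ => rfl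
    · exact Finset.sum_congr (Finset.filter_congr fun x _ =>
        (and_comm.trans (and_congr_left fun _ => (hfne x).symm))) fun _ _ => rfl
  have hP : ∑ x ∈ Finset.univ.filter (fun x => h x = 1), d x = A + B := ehsplit 1
  have hQ : ∑ x ∈ Finset.univ.filter (fun x => h x = -1), d x = A' + B' := ehsplit (-1)
  -- nonnegativity
  have sum_nn : ∀ s : Finset X, 0 ≤ ∑ x ∈ s, d x := fun s => Finset.sum_nonneg fun x _ => hd0 x
  have hA0 : 0 ≤ A := sum_nn _
  have hA'0 : 0 ≤ A' := sum_nn _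
  have hB0 : 0 ≤ B := sum_nn _
  have hB'0 : 0 ≤ B' := sum_nn _
  have hane : a ≠ 0 := ne_of_gt hpos
  have hbne : b ≠ 0 := ne_of_gt hneg
  -- edge computation
  have e11 : ∑ x ∈ Finset.univ.filter (fun x => f x = 1 ∧ h x = 1), dbar x * f x * h x
      = A / (2*a) := by
    rw [hA_def, Finset.sum_div]
    refine Finset.sum_congr rfl fun x hx => ?_
    obtain ⟨-, hx1, hx2⟩ := Finset.mem_filter.mp hx
    rw [hdbar x, hx1, hx2, mul_one, mul_one]
  have e12 : ∑ x ∈ Finset.univ.filter (fun x => f x = 1 ∧ h x = -1), dbar x * f x * h x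
      = -(A' / (2*a)) := by
    rw [hA'_def, Finset.sum_div, ← Finset.sum_neg_distrib]
    refine Finset.sum_congr rfl fun x hx => ?_
    obtain ⟨-, hx1, hx2⟩ := Finset.mem_filter.mp hx
    rw [hdbar x, hx1, hx2]; ring
  have e21 : ∑ x ∈ Finset.univ.filter (fun x => f x = -1 ∧ h x = 1), dbar x * f x * h x
      = -(B / (2*b)) := by
    rw [hB_def, Finset.sum_div, ← Finset.sum_neg_distrib]
    refine Finset.sum_congr rfl fun x hx => ?_
    obtain ⟨-, hx1, hx2⟩ := Finset.mem_filter.mp hx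
    rw [hdbar x, hx1, hx2]; ring
  have e22 : ∑ x ∈ Finset.univ.filter (fun x => f x = -1 ∧ h x = -1), dbar x * f x * h x
      = B' / (2*b) := by
    rw [hB'_def, Finset.sum_div]
    refine Finset.sum_congr rfl fun x hx => ?_
    obtain ⟨-, hx1, hx2⟩ := Finset.mem_filter.mp hx
    rw [hdbar x, hx1, hx2]; ring
  have hedge2 : γ ≤ A / (2*a) + -(A' / (2*a)) + (-(B / (2*b)) + B' / (2*b)) := by
    calc γ ≤ ∑ x, dbar x * f x * h x := hedge
    _ = _ := by
        rw [← Finset.sum_filter_add_sum_filter_not Finset.univ (fun x => f x = 1)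
          (fun x => dbar x * f x * h x), ← efneg,
          esplit (fun x => f x = 1) (fun x => dbar x * f x * h x),
          esplit (fun x => f x = -1) (fun x => dbar x * f x * h x),
          e11, e12, e21, e22]
  -- normalized quantities
  set u := A / a with hu_def
  set v := B / b with hv_def
  have hu0 : 0 ≤ u := div_nonneg hA0 (le_of_lt hpos)
  have hv0 : 0 ≤ v := div_nonneg hB0 (le_of_lt hneg)
  have hu1 : u ≤ 1 := by rw [hu_def, div_le_one hpos]; linarith
  have hv1 : v ≤ 1 := by rw [hv_def, div_le_one hneg]; linarith
  have hA : A = u * a := by rw [hu_def, div_mul_cancel₀ _ hane]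
  have hB : B = v * b := by rw [hv_def, div_mul_cancel₀ _ hbne]
  have hA' : A' = (1 - u) * a := by linear_combination hAa - hA
  have hB' : B' = (1 - v) * b := by linear_combination hBb - hB
  have hγuv : γ ≤ u - v := by
    have : A / (2*a) + -(A' / (2*a)) + (-(B / (2*b)) + B' / (2*b)) = u - v := by
      rw [hA', hB', hA, hB, hu_def, hv_def]
      field_simp
      ring
    linarith [hedge2, this.symm.le]
  -- entropy rewrite
  have hent : entropy d f = 2 * Real.sqrt (a * b) := by
    rw [entropy, ← ha_def, G, show 1 - a = b from by linarith]
  -- cond entropy rewrite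
  have hcond : condEntropy d f h = 2 * Real.sqrt (A * B) + 2 * Real.sqrt (A' * B') := by
    rw [condEntropy, ← hA_def, ← hA'_def, hP, hQ,
      pG_eq (A+B) A (by linarith) hA0 (by linarith),
      pG_eq (A'+B') A' (by linarith) hA'0 (by linarith)]
    ring_nf
  -- put it together
  have hsqab : 0 ≤ Real.sqrt (a * b) := Real.sqrt_nonneg _
  have h1 : Real.sqrt (A * B) = Real.sqrt (u*v) * Real.sqrt (a*b) := by
    rw [hA, hB, show u*a*(v*b) = u*v*(a*b) from by ring,
      Real.sqrt_mul (mul_nonneg hu0 hv0)]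
  have h2 : Real.sqrt (A' * B') = Real.sqrt ((1-u)*(1-v)) * Real.sqrt (a*b) := by
    rw [hA', hB', show (1-u)*a*((1-v)*b) = (1-u)*(1-v)*(a*b) from by ring,
      Real.sqrt_mul (mul_nonneg (by linarith) (by linarith))]
  have hcore := core_ineq u v γ hu0 hu1 hv0 hv1 hγ.1 hγ.2 hγuv
  rw [hcond, hent, h1, h2]
  nlinarith [mul_le_mul_of_nonneg_right hcore hsqab]
end

section
/- Let 0 ≤ a ≤ b ≤ 1 and δ, λ > 0 be such that for every q ∈ [a,b], sup_{q'∈[a,b]} G(q') ≤ max{δ, (1+λ)·G(q)}. Let N be a finite nonempty set with p_u > 0 and q_u ∈ [a,b] for each u ∈ N, and set P = Σ_{u∈N} p_u and Q = (Σ_{u∈N} p_u q_u)/P. Then P·G(Q) ≤ δ·P + (1+λ)·Σ_{u∈N} p_u G(q_u). -/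
lemma G_nonneg (q : ℝ) : 0 ≤ G q := by
  unfold G; positivity

/-- if on the interval `[a,b] ⊆ [0,1]` every value of `G` is bounded by
`max{δ, (1+λ)·G(q)}` for every `q ∈ [a,b]` (i.e. `sup_{q'∈[a,b]} G q' ≤ max{δ, (1+λ)·G q}`),
then for positive weights `p_u` and points `q_u ∈ [a,b]`, with `P = Σ_u p_u` and
`Q = (Σ_u p_u q_u)/P`, we have `P·G(Q) ≤ δ·P + (1+λ)·Σ_u p_u G(q_u)`. -/
theorem stmt7 (a b δ lam : ℝ) (ha : 0 ≤ a) (hab : a ≤ b) (hb : b ≤ 1)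
    (hδ : 0 < δ) (hlam : 0 < lam)
    (hnet : ∀ q ∈ Set.Icc a b, ∀ q' ∈ Set.Icc a b, G q' ≤ max δ ((1 + lam) * G q))
    {N : Type*} [Fintype N] [Nonempty N]
    (p q : N → ℝ) (hp : ∀ u, 0 < p u) (hq : ∀ u, q u ∈ Set.Icc a b)
    (P Q : ℝ) (hP : P = ∑ u, p u) (hQ : Q = (∑ u, p u * q u) / P) :
    P * G Q ≤ δ * P + (1 + lam) * ∑ u, p u * G (q u) := by
  have hPpos : 0 < P := by
    rw [hP]; exact Finset.sum_pos (fun u _ => hp u) Finset.univ_nonempty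
  have hQa : a * P ≤ ∑ u, p u * q u := by
    rw [hP, Finset.mul_sum]
    exact Finset.sum_le_sum fun u _ => by
      rw [mul_comm]; exact mul_le_mul_of_nonneg_left (hq u).1 (hp u).le
  have hQb : (∑ u, p u * q u) ≤ b * P := by
    rw [hP, Finset.mul_sum]
    exact Finset.sum_le_sum fun u _ => by
      rw [mul_comm (b)]; exact mul_le_mul_of_nonneg_left (hq u).2 (hp u).le
  have hQmem : Q ∈ Set.Icc a b := by
    constructor
    · rw [hQ, le_div_iff₀ hPpos]; exact hQa
    · rw [hQ, div_le_iff₀ hPpos]; exact hQb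
  have key : ∀ u : N, p u * G Q ≤ δ * p u + (1 + lam) * (p u * G (q u)) := by
    intro u
    have h := hnet (q u) (hq u) Q hQmem
    have hmax : max δ ((1 + lam) * G (q u)) ≤ δ + (1 + lam) * G (q u) := by
      apply max_le
      · nlinarith [G_nonneg (q u)]
      · linarith
    calc p u * G Q ≤ p u * (δ + (1 + lam) * G (q u)) :=
          mul_le_mul_of_nonneg_left (h.trans hmax) (hp u).le
      _ = δ * p u + (1 + lam) * (p u * G (q u)) := by ring
  calc P * G Q = ∑ u, p u * G Q := by rw [hP, Finset.sum_mul]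
    _ ≤ ∑ u, (δ * p u + (1 + lam) * (p u * G (q u))) :=
        Finset.sum_le_sum fun u _ => key u
    _ = δ * P + (1 + lam) * ∑ u, p u * G (q u) := by
        rw [Finset.sum_add_distrib, ← Finset.mul_sum, ← Finset.mul_sum, hP]
end

section
/- Let n ≥ 1 and f : {-1,1}^n → {-1,1}, and define h_i : {-1,1}^n → {-1,1} by h_i(x) = x_i if i ≤ n and h_i(x) = -x_{i-n} if n < i ≤ 2n. Suppose γ ∈ ℝ is such that for every balanced distribution d on {-1,1}^n with respect to f there exists i ∈ {1,…,2n} with Σ_{x∈{-1,1}^n} d_x f(x) h_i(x) ≥ γ. Then there exist w ∈ ℝ^{2n} with w ≥ 0 and Σ_{i=1}^{2n} w_i = 1, and b ∈ ℝ, such that f(x)·(Σ_{i=1}^{2n} w_i h_i(x) + b) ≥ γ for all x ∈ {-1,1}^n; that is, f is a linear threshold function with margin at least γ. -/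
/-- The value of a `±1` coordinate encoded as a Boolean: `χ true = 1`, `χ false = -1`. -/
def chi (b : Bool) : ℝ := if b then 1 else -1

/-- The hypothesis set of the `2n` (possibly negated) projections on `{-1,1}^n`:
`hyp n i x = x_i` for `i < n` and `hyp n i x = -x_{i-n}` for `n ≤ i < 2n`. -/
def hyp (n : ℕ) (i : Fin (2 * n)) (x : Fin n → Bool) : ℝ :=
  if h : (i : ℕ) < n then chi (x ⟨i, h⟩)
  else -chi (x ⟨(i : ℕ) - n, by have := i.isLt; omega⟩)

lemma hyp_mem (n : ℕ) (i : Fin (2 * n)) (x : Fin n → Bool) :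
    hyp n i x = 1 ∨ hyp n i x = -1 := by
  unfold hyp chi
  split <;> split <;> simp

lemma hyp_ge (n : ℕ) (i : Fin (2 * n)) (x : Fin n → Bool) : -1 ≤ hyp n i x := by
  rcases hyp_mem n i x with h | h <;> rw [h] <;> norm_num

lemma hyp_le (n : ℕ) (i : Fin (2 * n)) (x : Fin n → Bool) : hyp n i x ≤ 1 := by
  rcases hyp_mem n i x with h | h <;> rw [h] <;> norm_num

/-- duality direction: if for every balanced distribution `d` with respect to
`f` some projection hypothesis `h_i` has edge at least `γ`, then there are weights `w ≥ 0` with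
`Σ_i w_i = 1` and a bias `b` such that `f(x)·(Σ_i w_i·h_i(x) + b) ≥ γ` for all `x`; that is,
`f` is a linear threshold function with margin at least `γ`. -/
theorem stmt13 (n : ℕ) (hn : 1 ≤ n) (f : (Fin n → Bool) → ℝ)
    (hf : ∀ x, f x = 1 ∨ f x = -1)
    (γ : ℝ)
    (hwha : ∀ d : (Fin n → Bool) → ℝ, (∀ x, 0 ≤ d x) →
      (∑ x ∈ Finset.univ.filter (fun x => f x = 1), d x = 1/2) →
      (∑ x ∈ Finset.univ.filter (fun x => f x = -1), d x = 1/2) →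
      ∃ i : Fin (2 * n), γ ≤ ∑ x, d x * f x * hyp n i x) :
    ∃ w : Fin (2 * n) → ℝ, (∀ i, 0 ≤ w i) ∧ ∑ i, w i = 1 ∧
      ∃ b : ℝ, ∀ x, γ ≤ f x * (∑ i, w i * hyp n i x + b) := by
  have hi0 : (0 : ℕ) < 2 * n := by omega
  set i0 : Fin (2 * n) := ⟨0, hi0⟩ with hi0def
  -- degenerate (constant) cases
  by_cases hpos : ∃ x, f x = 1
  swap
  · -- f ≡ -1
    refine ⟨fun i => if i = i0 then 1 else 0, ?_, ?_, -γ - 1, ?_⟩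
    · intro i; by_cases h : i = i0 <;> simp [h]
    · simp
    · intro x
      have hfx : f x = -1 := (hf x).resolve_left (fun h => hpos ⟨x, h⟩)
      have : ∑ i, (if i = i0 then (1:ℝ) else 0) * hyp n i x = hyp n i0 x := by
        rw [Finset.sum_eq_single i0] <;> simp +contextual
      rw [this, hfx]
      have := hyp_le n i0 x
      nlinarith
  by_cases hneg : ∃ x, f x = -1
  swap
  · -- f ≡ 1
    refine ⟨fun i => if i = i0 then 1 else 0, ?_, ?_, γ + 1, ?_⟩
    · intro i; by_cases h : i = i0 <;> simp [h]
    · simp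
    · intro x
      have hfx : f x = 1 := (hf x).resolve_right (fun h => hneg ⟨x, h⟩)
      have : ∑ i, (if i = i0 then (1:ℝ) else 0) * hyp n i x = hyp n i0 x := by
        rw [Finset.sum_eq_single i0] <;> simp +contextual
      rw [this, hfx]
      have := hyp_ge n i0 x
      nlinarith
  -- main case
  obtain ⟨xp, hxp⟩ := hpos
  obtain ⟨xm, hxm⟩ := hneg
  classical
  set E := Fin (2 * n) → ℝ
  set S : Set E := {p | ∃ d : (Fin n → Bool) → ℝ, (∀ z, 0 ≤ d z) ∧
      (∑ z ∈ Finset.univ.filter (fun z => f z = 1), d z = 1/2) ∧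
      (∑ z ∈ Finset.univ.filter (fun z => f z = -1), d z = 1/2) ∧
      ∀ i, p i = ∑ z, d z * f z * hyp n i z} with hSdef
  set O : Set E := {p | ∀ i, p i < γ} with hOdef
  have hOopen : IsOpen O := by
    have : O = ⋂ i, {p : E | p i < γ} := by ext p; simp [hOdef, Set.mem_iInter]
    rw [this]
    exact isOpen_iInter_of_finite fun i => isOpen_lt (continuous_apply i) continuous_const
  have hOconv : Convex ℝ O := by
    have : O = ⋂ i, {p : E | p i < γ} := by ext p; simp [hOdef, Set.mem_iInter]
    rw [this]
    exact convex_iInter fun i => convex_halfSpace_lt (𝕜 := ℝ) (f := fun p : E => p i) (LinearMap.isLinear (LinearMap.proj (R := ℝ) (φ := fun _ : Fin (2 * n) => ℝ) i)) γ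
  have hSconv : Convex ℝ S := by
    rintro p ⟨d1, h1a, h1b, h1c, h1d⟩ q ⟨d2, h2a, h2b, h2c, h2d⟩ a b ha hb hab
    refine ⟨fun z => a * d1 z + b * d2 z, ?_, ?_, ?_, ?_⟩
    · intro z; exact add_nonneg (mul_nonneg ha (h1a z)) (mul_nonneg hb (h2a z))
    · rw [Finset.sum_add_distrib, ← Finset.mul_sum, ← Finset.mul_sum, h1b, h2b]; linarith
    · rw [Finset.sum_add_distrib, ← Finset.mul_sum, ← Finset.mul_sum, h1c, h2c]; linarith
    · intro i
      have : (a • p + b • q) i = a * p i + b * q i := rfl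
      rw [this, h1d, h2d, Finset.mul_sum, Finset.mul_sum, ← Finset.sum_add_distrib]
      exact Finset.sum_congr rfl fun z _ => by ring
  have hdisj : Disjoint O S := by
    rw [Set.disjoint_left]
    rintro p hpO ⟨d, hda, hdb, hdc, hdd⟩
    obtain ⟨i, hi⟩ := hwha d hda hdb hdc
    exact absurd (hpO i) (by rw [hdd i]; exact not_lt.2 hi)
  obtain ⟨φ, u, hφO, hφS⟩ := geometric_hahn_banach_open hOconv hOopen hSconv hdisj
  set a : Fin (2 * n) → ℝ := fun i => φ (fun j => if i = j then 1 else 0) with hadef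
  have hφ_eq : ∀ z : E, φ z = ∑ i, z i * a i := by
    intro z
    conv_lhs => rw [pi_eq_sum_univ z]
    rw [map_sum]
    exact Finset.sum_congr rfl fun i _ => by rw [map_smul]; simp [hadef, smul_eq_mul]
  -- a is nonneg
  have hO_mem : ∀ (c : ℝ) (i : Fin (2*n)) (t : ℝ), 0 ≤ t → c < γ →
      (fun j => c - if j = i then t else 0) ∈ O := by
    intro c i t ht hc j
    dsimp only [hOdef, Set.mem_setOf_eq]
    split <;> linarith
  have ha_nonneg : ∀ i, 0 ≤ a i := by
    intro i
    by_contra hai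
    push_neg at hai
    set c : ℝ := γ - 1
    set C : ℝ := ∑ j, c * a j with hCdef
    set t : ℝ := max 0 ((u - C) / (-a i)) with htdef
    have ht0 : 0 ≤ t := le_max_left _ _
    have hmem := hO_mem c i t ht0 (by simp [c])
    have hlt := hφO _ hmem
    rw [hφ_eq] at hlt
    have hsum : ∑ j, (c - if j = i then t else 0) * a j = C - t * a i := by
      have hterm : ∀ j, (c - if j = i then t else 0) * a j
          = c * a j - (if j = i then t * a j else 0) := by
        intro j; by_cases hj : j = i <;> simp [hj, sub_mul]
      rw [Finset.sum_congr rfl (fun j _ => hterm j), Finset.sum_sub_distrib,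
        Finset.sum_ite_eq' Finset.univ i (fun j => t * a j)]
      simp [hCdef]
    rw [hsum] at hlt
    have htge : (u - C) / (-a i) ≤ t := le_max_right _ _
    have : u - C ≤ t * (-a i) := by
      rw [div_le_iff₀ (by linarith)] at htge; linarith
    linarith
  set A : ℝ := ∑ i, a i with hAdef
  have hA_nonneg : 0 ≤ A := Finset.sum_nonneg fun i _ => ha_nonneg i
  -- the canonical points of S
  have hpair : ∀ x y : Fin n → Bool, f x = 1 → f y = -1 →
      (fun i => (hyp n i x - hyp n i y) / 2) ∈ S := by
    intro x y hx hy
    have hxy : x ≠ y := by intro h; rw [h, hy] at hx; norm_num at hx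
    refine ⟨fun z => (if z = x then 1/2 else 0) + (if z = y then 1/2 else 0), ?_, ?_, ?_, ?_⟩
    · intro z; dsimp only; split <;> split <;> norm_num
    · rw [Finset.sum_add_distrib]
      rw [Finset.sum_ite_eq' _ x (fun _ => (1:ℝ)/2), Finset.sum_ite_eq' _ y (fun _ => (1:ℝ)/2)]
      rw [if_pos (by simp [hx]), if_neg (by norm_num [hy])]
      norm_num
    · rw [Finset.sum_add_distrib]
      rw [Finset.sum_ite_eq' _ x (fun _ => (1:ℝ)/2), Finset.sum_ite_eq' _ y (fun _ => (1:ℝ)/2)]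
      rw [if_neg (by norm_num [hx]), if_pos (by simp [hy])]
      norm_num
    · intro i
      have : ∀ z, ((if z = x then (1:ℝ)/2 else 0) + (if z = y then 1/2 else 0)) * f z * hyp n i z
          = (if z = x then (1:ℝ)/2 * f x * hyp n i x else 0)
            + (if z = y then 1/2 * f y * hyp n i y else 0) := by
        intro z
        by_cases h1 : z = x <;> by_cases h2 : z = y
        · exact absurd (h1.symm.trans h2) hxy
        · subst h1; simp [h2]
        · subst h2; simp [h1]
        · simp [h1, h2]
      rw [Finset.sum_congr rfl (fun z _ => this z), Finset.sum_add_distrib,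
        Finset.sum_ite_eq' _ x, Finset.sum_ite_eq' _ y]
      simp [hx, hy]
      ring
  have hS_ne : ((fun i => (hyp n i xp - hyp n i xm) / 2) : E) ∈ S := hpair xp xm hxp hxm
  -- A > 0
  have hA_pos : 0 < A := by
    rcases hA_nonneg.lt_or_eq with h | h
    · exact h
    have hzero : ∀ i, a i = 0 := by
      intro i
      have := Finset.sum_eq_zero_iff_of_nonneg (fun j (_ : j ∈ Finset.univ) => ha_nonneg j)
      exact (this.mp h.symm) i (Finset.mem_univ i)
    have hφ0 : ∀ z : E, φ z = 0 := by
      intro z; rw [hφ_eq]; simp [hzero]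
    have h1 : (0:ℝ) < u := by
      have := hφO (fun _ => γ - 1) (fun i => by norm_num)
      rwa [hφ0] at this
    have h2 : u ≤ 0 := by
      have := hφS _ hS_ne
      rwa [hφ0] at this
    linarith
  -- γ * A ≤ u
  have hAne : A ≠ 0 := ne_of_gt hA_pos
  have hγA : γ * A ≤ u := by
    by_contra h
    push_neg at h
    set ε : ℝ := (γ * A - u) / A with hεdef
    have hε : 0 < ε := div_pos (by linarith) hA_pos
    have hmem : ((fun _ => γ - ε) : E) ∈ O := fun i => by dsimp; linarith
    have hlt := hφO _ hmem
    rw [hφ_eq] at hlt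
    have hsum : ∑ i, (γ - ε) * a i = (γ - ε) * A := by
      rw [hAdef, Finset.mul_sum]
    rw [hsum] at hlt
    have heq : (γ - ε) * A = u := by
      rw [hεdef]; field_simp; ring
    linarith
  -- define weights
  refine ⟨fun i => a i / A, fun i => div_nonneg (ha_nonneg i) hA_nonneg, ?_, ?_⟩
  · rw [← Finset.sum_div, ← hAdef, div_self (ne_of_gt hA_pos)]
  set g : (Fin n → Bool) → ℝ := fun z => ∑ i, a i / A * hyp n i z with hgdef
  have hgap : ∀ x y, f x = 1 → f y = -1 → 2 * γ ≤ g x - g y := by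
    intro x y hx hy
    have hmem := hpair x y hx hy
    have := hφS _ hmem
    rw [hφ_eq] at this
    have hsum : ∑ i, (hyp n i x - hyp n i y) / 2 * a i = (A * (g x - g y) / 2) := by
      rw [hgdef]
      dsimp
      rw [← Finset.sum_sub_distrib, Finset.mul_sum, Finset.sum_div]
      refine Finset.sum_congr rfl fun i _ => ?_
      field_simp
    rw [hsum] at this
    have h2 : γ * A ≤ A * (g x - g y) / 2 := le_trans hγA this
    nlinarith [h2, hA_pos]
  set P : Finset (Fin n → Bool) := Finset.univ.filter (fun z => f z = 1) with hPdef
  set N : Finset (Fin n → Bool) := Finset.univ.filter (fun z => f z = -1) with hNdef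
  have hPne : P.Nonempty := ⟨xp, by simp [hPdef, hxp]⟩
  have hNne : N.Nonempty := ⟨xm, by simp [hNdef, hxm]⟩
  set m1 : ℝ := P.inf' hPne g with hm1def
  set m2 : ℝ := N.sup' hNne g with hm2def
  have hm : 2 * γ ≤ m1 - m2 := by
    obtain ⟨x, hxP, hx1⟩ := P.exists_mem_eq_inf' hPne g
    obtain ⟨y, hyN, hy1⟩ := N.exists_mem_eq_sup' hNne g
    rw [hm1def, hm2def, hx1, hy1]
    exact hgap x y (by simpa [hPdef] using hxP) (by simpa [hNdef] using hyN)
  refine ⟨-(m1 + m2)/2, ?_⟩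
  intro x
  rcases hf x with hx | hx
  · have hxP : x ∈ P := by simp [hPdef, hx]
    have h1 : m1 ≤ g x := P.inf'_le g hxP
    rw [hx]
    have hgx : (∑ i, (fun i => a i / A) i * hyp n i x) = g x := rfl
    rw [hgx]
    nlinarith
  · have hxN : x ∈ N := by simp [hNdef, hx]
    have h1 : g x ≤ m2 := N.le_sup' g hxN
    rw [hx]
    have hgx : (∑ i, (fun i => a i / A) i * hyp n i x) = g x := rfl
    rw [hgx]
    nlinarith
end

section
/- Let n ≥ 1 and let f : {-1,1}^n → {-1,1} be non-constant, and define h_i : {-1,1}^n → {-1,1} by h_i(x) = x_i if i ≤ n and h_i(x) = -x_{i-n} if n < i ≤ 2n. Then the maximum margin equals the minimum worst-case edge: sup { ρ ∈ ℝ : ∃ w ∈ ℝ^{2n}, w ≥ 0, Σ_{i=1}^{2n} w_i = 1, ∃ b ∈ ℝ, ∀ x ∈ {-1,1}^n, f(x)·(Σ_{i=1}^{2n} w_i h_i(x) + b) ≥ ρ } = inf { max_{1≤i≤2n} Σ_{x∈{-1,1}^n} d_x f(x) h_i(x) : d is a balanced distribution on {-1,1}^n with respect to f }. -/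
lemma abs_hyp (n : ℕ) (i : Fin (2 * n)) (x : Fin n → Bool) : |hyp n i x| = 1 := by
  have hchi : ∀ b : Bool, |chi b| = 1 := by
    intro b; cases b <;> simp [chi]
  unfold hyp
  split <;> simp [hchi]


lemma vonNeumann {I J : Type} [Fintype I] [Fintype J] [Nonempty I] [Nonempty J]
    (M : I → J → ℝ) (v : ℝ)
    (hv : ∀ q : J → ℝ, (∀ j, 0 ≤ q j) → ∑ j, q j = 1 → ∃ i, v ≤ ∑ j, q j * M i j) :
    ∃ w : I → ℝ, (∀ i, 0 ≤ w i) ∧ ∑ i, w i = 1 ∧ ∀ j, v ≤ ∑ i, w i * M i j := by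
  classical
  set O : Set (I → ℝ) := {z | ∀ i, z i < v} with hO
  set C : Set (I → ℝ) := {z | ∃ q : J → ℝ, (∀ j, 0 ≤ q j) ∧ ∑ j, q j = 1 ∧
      ∀ i, z i = ∑ j, q j * M i j} with hC
  have hOopen : IsOpen O := by
    have h1 : O = ⋂ i, (fun z : I → ℝ => z i) ⁻¹' Set.Iio v := by
      ext z; simp [hO, Set.mem_iInter]
    rw [h1]
    exact isOpen_iInter_of_finite fun i => (isOpen_Iio).preimage (continuous_apply i)
  have hOconv : Convex ℝ O := by
    have h1 : O = ⋂ i, {z : I → ℝ | z i < v} := by ext z; simp [hO]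
    rw [h1]
    exact convex_iInter fun i => convex_halfSpace_lt ⟨fun _ _ => rfl, fun _ _ => rfl⟩ v
  have hCconv : Convex ℝ C := by
    rintro z1 ⟨q1, hq1, hs1, hz1⟩ z2 ⟨q2, hq2, hs2, hz2⟩ a b ha hb hab
    refine ⟨fun j => a * q1 j + b * q2 j,
      fun j => add_nonneg (mul_nonneg ha (hq1 j)) (mul_nonneg hb (hq2 j)), ?_, ?_⟩
    · simp only [Finset.sum_add_distrib, ← Finset.mul_sum, hs1, hs2]
      linarith
    · intro i
      simp only [Pi.add_apply, Pi.smul_apply, smul_eq_mul, hz1 i, hz2 i]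
      rw [Finset.mul_sum, Finset.mul_sum, ← Finset.sum_add_distrib]
      exact Finset.sum_congr rfl fun j _ => by ring
  have hdisj : Disjoint O C := by
    rw [Set.disjoint_left]
    rintro z hzO ⟨q, hq, hs, hz⟩
    obtain ⟨i, hi⟩ := hv q hq hs
    have := hzO i
    rw [hz i] at this
    linarith
  obtain ⟨φ, u, hφO, hφC⟩ := geometric_hahn_banach_open hOconv hOopen hCconv hdisj
  set w' : I → ℝ := fun i => φ (fun j => if i = j then 1 else 0) with hw'
  have hφ_eq : ∀ z : I → ℝ, φ z = ∑ i, z i * w' i := by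
    intro z
    have h1 := LinearMap.pi_apply_eq_sum_univ (φ : (I → ℝ) →ₗ[ℝ] ℝ) z
    simpa [smul_eq_mul, hw'] using h1
  have hCne : C.Nonempty := by
    obtain ⟨j0⟩ := ‹Nonempty J›
    refine ⟨fun i => M i j0, fun j => if j0 = j then 1 else 0,
      fun j => by dsimp only; split <;> norm_num, by simp, fun i => ?_⟩
    simp [ite_mul]
  have hw'_nonneg : ∀ i, 0 ≤ w' i := by
    intro i
    by_contra hneg
    push_neg at hneg
    have key : ∀ t : ℝ, 0 ≤ t → (∑ j, (v - 1) * w' j) - t * w' i < u := by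
      intro t ht0
      have hz : (fun j => (v - 1) - (if i = j then t else 0)) ∈ O := by
        intro j
        show (v - 1 - if i = j then t else 0) < v
        split <;> linarith
      have hlt := hφO _ hz
      rw [hφ_eq] at hlt
      calc (∑ j, (v - 1) * w' j) - t * w' i
          = ∑ j, ((v - 1) - (if i = j then t else 0)) * w' j := by
            simp [sub_mul, Finset.sum_sub_distrib, ite_mul]
        _ < u := hlt
    set s0 : ℝ := ∑ j, (v - 1) * w' j with hs0
    set m : ℝ := max 0 ((u - s0) / (-w' i)) with hm
    have h1 := key m (le_max_left _ _)
    have h2 : (u - s0) / (-w' i) ≤ m := le_max_right _ _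
    rw [div_le_iff₀ (by linarith : (0:ℝ) < -w' i)] at h2
    nlinarith
  set S : ℝ := ∑ i, w' i with hS
  have hS0 : 0 ≤ S := Finset.sum_nonneg fun i _ => hw'_nonneg i
  have hSpos : 0 < S := by
    rcases hS0.lt_or_eq with h | h
    · exact h
    · exfalso
      have hall : ∀ i ∈ Finset.univ, w' i = 0 :=
        (Finset.sum_eq_zero_iff_of_nonneg (fun i _ => hw'_nonneg i)).mp h.symm
      have hzero : ∀ z, φ z = 0 := fun z => by
        rw [hφ_eq]
        exact Finset.sum_eq_zero fun i _ => by rw [hall i (Finset.mem_univ i), mul_zero]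
      obtain ⟨c, hc⟩ := hCne
      have h1 := hφC c hc
      have h2 := hφO (fun _ => v - 1) (fun i => by show v - 1 < v; linarith)
      rw [hzero] at h1 h2
      linarith
  have hvS : v * S ≤ u := by
    by_contra hlt
    push_neg at hlt
    set ε : ℝ := (v * S - u) / (2 * S) with hε
    have hε0 : 0 < ε := div_pos (by linarith) (by linarith)
    have hmem : (fun _ : I => v - ε) ∈ O := fun i => by show v - ε < v; linarith
    have h1 := hφO _ hmem
    rw [hφ_eq] at h1
    rw [show ∑ i, (v - ε) * w' i = (v - ε) * S from by rw [Finset.mul_sum]] at h1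
    have h2 : ε * S = (v * S - u) / 2 := by
      rw [hε]
      field_simp
    nlinarith
  refine ⟨fun i => w' i / S, fun i => div_nonneg (hw'_nonneg i) hS0, ?_, ?_⟩
  · rw [← Finset.sum_div, ← hS]
    field_simp
  · intro j
    have hcol : (fun i => M i j) ∈ C := by
      refine ⟨fun j' => if j = j' then 1 else 0,
        fun j' => by dsimp only; split <;> norm_num, by simp, fun i => ?_⟩
      simp [ite_mul]
    have h1 := hφC _ hcol
    rw [hφ_eq] at h1
    have h3 : ∑ i, (w' i / S) * M i j = (∑ i, M i j * w' i) / S := by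
      rw [Finset.sum_div]
      exact Finset.sum_congr rfl fun i _ => by ring
    rw [h3, le_div_iff₀ hSpos]
    calc v * S ≤ u := hvS
      _ ≤ _ := h1

/-- LP duality: for non-constant `f : {-1,1}^n → {-1,1}`, the maximum margin
over convex weight vectors `w` (with bias `b`) equals the minimum over balanced distributions
`d` of the largest edge `max_i Σ_x d_x f(x) h_i(x)` of the projection hypotheses. -/
theorem stmt14 (n : ℕ) (hn : 1 ≤ n) (f : (Fin n → Bool) → ℝ)
    (hf : ∀ x, f x = 1 ∨ f x = -1)
    (hfnc : ∃ x y, f x ≠ f y) :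
    sSup {ρ : ℝ | ∃ w : Fin (2 * n) → ℝ, (∀ i, 0 ≤ w i) ∧ ∑ i, w i = 1 ∧
        ∃ b : ℝ, ∀ x, ρ ≤ f x * (∑ i, w i * hyp n i x + b)} =
    sInf {e : ℝ | ∃ d : (Fin n → Bool) → ℝ, (∀ x, 0 ≤ d x) ∧
        (∑ x ∈ Finset.univ.filter (fun x => f x = 1), d x = 1/2) ∧
        (∑ x ∈ Finset.univ.filter (fun x => f x = -1), d x = 1/2) ∧
        e = ⨆ i : Fin (2 * n), ∑ x, d x * f x * hyp n i x} := by
  classical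
  haveI hIne : Nonempty (Fin (2 * n)) := ⟨⟨0, by omega⟩⟩
  set Pset : Set ℝ := {ρ : ℝ | ∃ w : Fin (2 * n) → ℝ, (∀ i, 0 ≤ w i) ∧ ∑ i, w i = 1 ∧
      ∃ b : ℝ, ∀ x, ρ ≤ f x * (∑ i, w i * hyp n i x + b)} with hPset
  set Dset : Set ℝ := {e : ℝ | ∃ d : (Fin n → Bool) → ℝ, (∀ x, 0 ≤ d x) ∧
      (∑ x ∈ Finset.univ.filter (fun x => f x = 1), d x = 1/2) ∧
      (∑ x ∈ Finset.univ.filter (fun x => f x = -1), d x = 1/2) ∧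
      e = ⨆ i : Fin (2 * n), ∑ x, d x * f x * hyp n i x} with hDset
  -- basic facts about f
  obtain ⟨x0, y0, hxy⟩ := hfnc
  have hex1 : ∃ x, f x = 1 := by
    rcases hf x0 with h | h
    · exact ⟨x0, h⟩
    · rcases hf y0 with h' | h'
      · exact ⟨y0, h'⟩
      · exact absurd (h.trans h'.symm) hxy
  have hexm : ∃ x, f x = -1 := by
    rcases hf x0 with h | h
    · rcases hf y0 with h' | h'
      · exact absurd (h.trans h'.symm) hxy
      · exact ⟨y0, h'⟩
    · exact ⟨x0, h⟩
  obtain ⟨xp, hxp⟩ := hex1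
  obtain ⟨xn, hxn⟩ := hexm
  have hnot1 : ∀ x, f x = -1 → ¬ (f x = 1) := by
    intro x h h1; rw [h1] at h; norm_num at h
  have hnotm : ∀ x, f x = 1 → ¬ (f x = -1) := by
    intro x h h1; rw [h1] at h; norm_num at h
  -- splitting a sum over the two fibers
  have hsplit : ∀ g : (Fin n → Bool) → ℝ, ∑ x, g x =
      (∑ x ∈ Finset.univ.filter (fun x => f x = 1), g x) +
      (∑ x ∈ Finset.univ.filter (fun x => f x = -1), g x) := by
    intro g
    rw [← Finset.sum_filter_add_sum_filter_not Finset.univ (fun x => f x = 1) g]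
    congr 1
    apply Finset.sum_congr _ (fun _ _ => rfl)
    apply Finset.filter_congr
    intro x _
    rcases hf x with h | h <;> simp [h] <;> norm_num
  -- weak duality
  have weak : ∀ ρ ∈ Pset, ∀ e ∈ Dset, ρ ≤ e := by
    rintro ρ ⟨w, hw0, hw1, b, hwb⟩ e ⟨d, hd0, hdP, hdN, he⟩
    have hsum1 : ∑ x, d x = 1 := by
      rw [hsplit d, hdP, hdN]; norm_num
    have hdf : ∑ x, d x * f x = 0 := by
      rw [hsplit (fun x => d x * f x)]
      have e1 : ∑ x ∈ Finset.univ.filter (fun x => f x = 1), d x * f x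
          = ∑ x ∈ Finset.univ.filter (fun x => f x = 1), d x := by
        apply Finset.sum_congr rfl
        intro x hx
        rw [Finset.mem_filter] at hx
        rw [hx.2, mul_one]
      have e2 : ∑ x ∈ Finset.univ.filter (fun x => f x = -1), d x * f x
          = -∑ x ∈ Finset.univ.filter (fun x => f x = -1), d x := by
        rw [← Finset.sum_neg_distrib]
        apply Finset.sum_congr rfl
        intro x hx
        rw [Finset.mem_filter] at hx
        rw [hx.2]
        ring
      rw [e1, e2, hdP, hdN]; ring
    have step1 : ρ ≤ ∑ x, d x * (f x * (∑ i, w i * hyp n i x + b)) := by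
      calc ρ = ∑ x, d x * ρ := by rw [← Finset.sum_mul, hsum1, one_mul]
        _ ≤ _ := Finset.sum_le_sum fun x _ => mul_le_mul_of_nonneg_left (hwb x) (hd0 x)
    have step2 : ∑ x, d x * (f x * (∑ i, w i * hyp n i x + b))
        = ∑ i, w i * (∑ x, d x * f x * hyp n i x) := by
      have hx : ∀ x, d x * (f x * (∑ i, w i * hyp n i x + b))
          = (∑ i, w i * (d x * f x * hyp n i x)) + (d x * f x) * b := by
        intro x
        have h1 : d x * (f x * (∑ i, w i * hyp n i x + b))
            = d x * f x * (∑ i, w i * hyp n i x) + (d x * f x) * b := by ring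
        rw [h1, Finset.mul_sum]
        congr 1
        exact Finset.sum_congr rfl fun i _ => by ring
      rw [Finset.sum_congr rfl fun x _ => hx x, Finset.sum_add_distrib,
        ← Finset.sum_mul, hdf, zero_mul, add_zero, Finset.sum_comm]
      exact Finset.sum_congr rfl fun i _ => by rw [Finset.mul_sum]
    have step3 : ∑ i, w i * (∑ x, d x * f x * hyp n i x) ≤ e := by
      have hle : ∀ i : Fin (2 * n), (∑ x, d x * f x * hyp n i x) ≤ e := by
        intro i
        rw [he]
        exact le_ciSup (Finite.bddAbove_range fun i : Fin (2*n) => ∑ x, d x * f x * hyp n i x) i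
      calc ∑ i, w i * (∑ x, d x * f x * hyp n i x) ≤ ∑ i, w i * e :=
            Finset.sum_le_sum fun i _ => mul_le_mul_of_nonneg_left (hle i) (hw0 i)
        _ = e := by rw [← Finset.sum_mul, hw1, one_mul]
    linarith
  -- Pset is nonempty : ρ = -1 is feasible
  have hPne : (-1 : ℝ) ∈ Pset := by
    refine ⟨fun _ => 1 / (2 * n), fun i => by positivity, ?_, 0, ?_⟩
    · rw [Finset.sum_const, Finset.card_univ, Fintype.card_fin, nsmul_eq_mul]
      have : (0:ℝ) < n := by exact_mod_cast hn
      push_cast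
      field_simp
    · intro x
      have habs : |∑ i, (fun _ : Fin (2*n) => 1 / (2 * (n:ℝ))) i * hyp n i x| ≤ 1 := by
        calc |∑ i : Fin (2*n), 1 / (2 * (n:ℝ)) * hyp n i x|
            ≤ ∑ i : Fin (2*n), |1 / (2 * (n:ℝ)) * hyp n i x| := Finset.abs_sum_le_sum_abs _ _
          _ = ∑ i : Fin (2*n), 1 / (2 * (n:ℝ)) := by
              apply Finset.sum_congr rfl
              intro i _
              rw [abs_mul, abs_hyp, mul_one, abs_of_nonneg (by positivity)]
          _ = 1 := by
              rw [Finset.sum_const, Finset.card_univ, Fintype.card_fin, nsmul_eq_mul]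
              have : (0:ℝ) < n := by exact_mod_cast hn
              push_cast
              field_simp
      have hfabs : |f x| = 1 := by
        rcases hf x with h | h <;> rw [h] <;> norm_num
      rw [add_zero]
      show -1 ≤ f x * ∑ i : Fin (2*n), 1 / (2 * (n:ℝ)) * hyp n i x
      have h2 : |f x * ∑ i, (1:ℝ) / (2 * n) * hyp n i x| ≤ 1 := by
        rw [abs_mul, hfabs, one_mul]
        exact habs
      have := neg_abs_le (f x * ∑ i, (1:ℝ) / (2 * n) * hyp n i x)
      linarith
  have hDbddBelow : BddBelow Dset := ⟨-1, fun e he => weak (-1) hPne e he⟩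
  -- Dset is nonempty
  have hDne : Dset.Nonempty := by
    set P1 := Finset.univ.filter (fun x : Fin n → Bool => f x = 1) with hP1
    set N1 := Finset.univ.filter (fun x : Fin n → Bool => f x = -1) with hN1
    have hP1pos : 0 < P1.card := Finset.card_pos.mpr ⟨xp, by simp [hP1, hxp]⟩
    have hN1pos : 0 < N1.card := Finset.card_pos.mpr ⟨xn, by simp [hN1, hxn]⟩
    have hP1ne : (P1.card : ℝ) ≠ 0 := by exact_mod_cast hP1pos.ne'
    have hN1ne : (N1.card : ℝ) ≠ 0 := by exact_mod_cast hN1pos.ne'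
    refine ⟨_, fun z => if f z = 1 then 1/(2*(P1.card:ℝ)) else 1/(2*(N1.card:ℝ)),
      fun z => ?_, ?_, ?_, rfl⟩
    · dsimp only; split <;> positivity
    · rw [Finset.sum_congr rfl (fun z hz => if_pos (by simpa [hP1] using hz))]
      rw [Finset.sum_const, nsmul_eq_mul]
      field_simp
      rw [← hP1]
    · rw [Finset.sum_congr rfl (fun z hz => if_neg (hnot1 z (by simpa [hN1] using hz)))]
      rw [Finset.sum_const, nsmul_eq_mul]
      field_simp
      rw [← hN1]
  -- strong duality via minimax
  set V : ℝ := sInf Dset with hV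
  haveI : Nonempty {x : Fin n → Bool // f x = 1} := ⟨⟨xp, hxp⟩⟩
  haveI : Nonempty {x : Fin n → Bool // f x = -1} := ⟨⟨xn, hxn⟩⟩
  have hvhyp : ∀ q : ({x : Fin n → Bool // f x = 1} × {x : Fin n → Bool // f x = -1}) → ℝ,
      (∀ j, 0 ≤ q j) → ∑ j, q j = 1 →
      ∃ i : Fin (2*n), 2*V ≤ ∑ j, q j * (hyp n i j.1.1 - hyp n i j.2.1) := by
    intro q hq0 hq1
    set d : (Fin n → Bool) → ℝ := fun z =>
      if h : f z = 1 then (∑ y : {x // f x = -1}, q (⟨z, h⟩, y)) / 2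
      else if h' : f z = -1 then (∑ x : {x // f x = 1}, q (x, ⟨z, h'⟩)) / 2
      else 0 with hd
    have hd0 : ∀ z, 0 ≤ d z := by
      intro z
      rw [hd]
      dsimp only
      split
      · exact div_nonneg (Finset.sum_nonneg fun y _ => hq0 _) (by norm_num)
      split
      · exact div_nonneg (Finset.sum_nonneg fun x _ => hq0 _) (by norm_num)
      · exact le_refl 0
    have hdPval : ∀ a : {x // f x = 1}, d a.1 = (∑ y : {x // f x = -1}, q (a, y)) / 2 := by
      intro a
      rw [hd]
      dsimp only
      rw [dif_pos a.2]
    have hdNval : ∀ a : {x // f x = -1}, d a.1 = (∑ x : {x // f x = 1}, q (x, a)) / 2 := by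
      intro a
      rw [hd]
      dsimp only
      rw [dif_neg (hnot1 a.1 a.2), dif_pos a.2]
    have hdP : ∑ x ∈ Finset.univ.filter (fun x => f x = 1), d x = 1/2 := by
      rw [Finset.sum_subtype (p := fun x => f x = 1) (Finset.univ.filter (fun x => f x = 1)) (by simp) d]
      rw [Finset.sum_congr rfl fun a _ => hdPval a, ← Finset.sum_div,
        ← Fintype.sum_prod_type, hq1]
    have hdN : ∑ x ∈ Finset.univ.filter (fun x => f x = -1), d x = 1/2 := by
      rw [Finset.sum_subtype (p := fun x => f x = -1) (Finset.univ.filter (fun x => f x = -1)) (by simp) d]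
      rw [Finset.sum_congr rfl fun a _ => hdNval a, ← Finset.sum_div,
        ← Fintype.sum_prod_type_right, hq1]
    have hedge : ∀ i : Fin (2*n), ∑ x, d x * f x * hyp n i x
        = (∑ j : {x // f x = 1} × {x // f x = -1},
            q j * (hyp n i j.1.1 - hyp n i j.2.1)) / 2 := by
      intro i
      rw [hsplit (fun x => d x * f x * hyp n i x)]
      have e1 : ∑ x ∈ Finset.univ.filter (fun x => f x = 1), d x * f x * hyp n i x
          = (∑ j : {x // f x = 1} × {x // f x = -1}, q j * hyp n i j.1.1) / 2 := by
        rw [Finset.sum_subtype (p := fun x => f x = 1) (Finset.univ.filter (fun x => f x = 1))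
          (by simp) (fun x => d x * f x * hyp n i x)]
        rw [Fintype.sum_prod_type, Finset.sum_div]
        apply Finset.sum_congr rfl
        intro a _
        rw [hdPval a, a.2, mul_one, div_mul_eq_mul_div, Finset.sum_mul]
      have e2 : ∑ x ∈ Finset.univ.filter (fun x => f x = -1), d x * f x * hyp n i x
          = -((∑ j : {x // f x = 1} × {x // f x = -1}, q j * hyp n i j.2.1) / 2) := by
        rw [Finset.sum_subtype (p := fun x => f x = -1) (Finset.univ.filter (fun x => f x = -1))
          (by simp) (fun x => d x * f x * hyp n i x)]
        rw [Fintype.sum_prod_type_right, Finset.sum_div, ← Finset.sum_neg_distrib]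
        apply Finset.sum_congr rfl
        intro a _
        rw [hdNval a, a.2]
        rw [show ((∑ x : {x // f x = 1}, q (x, a)) / 2) * (-1) * hyp n i a.1
            = -((∑ x : {x // f x = 1}, q (x, a)) * hyp n i a.1 / 2) from by ring]
        rw [Finset.sum_mul]
      rw [e1, e2]
      rw [show ∑ j : {x // f x = 1} × {x // f x = -1}, q j * (hyp n i j.1.1 - hyp n i j.2.1)
          = (∑ j : {x // f x = 1} × {x // f x = -1}, q j * hyp n i j.1.1)
            - ∑ j : {x // f x = 1} × {x // f x = -1}, q j * hyp n i j.2.1 from by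
        rw [← Finset.sum_sub_distrib]
        exact Finset.sum_congr rfl fun j _ => by ring]
      ring
    have hVle : V ≤ ⨆ i : Fin (2*n), ∑ x, d x * f x * hyp n i x :=
      csInf_le hDbddBelow ⟨d, hd0, hdP, hdN, rfl⟩
    obtain ⟨i0, hi0⟩ := Finite.exists_max (fun i : Fin (2*n) => ∑ x, d x * f x * hyp n i x)
    have hsup : (⨆ i : Fin (2*n), ∑ x, d x * f x * hyp n i x) = ∑ x, d x * f x * hyp n i0 x :=
      le_antisymm (ciSup_le hi0)
        (le_ciSup (Finite.bddAbove_range fun i : Fin (2*n) => ∑ x, d x * f x * hyp n i x) i0)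
    refine ⟨i0, ?_⟩
    have h3 := hedge i0
    rw [hsup, h3] at hVle
    linarith
  obtain ⟨w, hw0, hw1, hkey⟩ := vonNeumann
    (I := Fin (2*n)) (J := {x : Fin n → Bool // f x = 1} × {x : Fin n → Bool // f x = -1})
    (fun i j => hyp n i j.1.1 - hyp n i j.2.1) (2*V) hvhyp
  have hkey' : ∀ (x : {x // f x = 1}) (y : {x // f x = -1}),
      2*V ≤ (∑ i, w i * hyp n i x.1) - (∑ i, w i * hyp n i y.1) := by
    intro x y
    have h1 := hkey (x, y)
    have h2 : ∑ i, w i * (hyp n i x.1 - hyp n i y.1)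
        = (∑ i, w i * hyp n i x.1) - (∑ i, w i * hyp n i y.1) := by
      rw [← Finset.sum_sub_distrib]
      exact Finset.sum_congr rfl fun i _ => by ring
    rw [h2] at h1
    exact h1
  obtain ⟨xm, hxm⟩ := Finite.exists_min (fun x : {x // f x = 1} => ∑ i, w i * hyp n i x.1)
  obtain ⟨ym, hym⟩ := Finite.exists_max (fun y : {x // f x = -1} => ∑ i, w i * hyp n i y.1)
  have hVmem : V ∈ Pset := by
    refine ⟨w, hw0, hw1,
      -((∑ i, w i * hyp n i xm.1) + (∑ i, w i * hyp n i ym.1))/2, ?_⟩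
    intro z
    rcases hf z with h | h
    · rw [h, one_mul]
      have h1 := hxm ⟨z, h⟩
      have h2 := hkey' xm ym
      dsimp only at h1
      linarith
    · rw [h]
      have h1 := hym ⟨z, h⟩
      have h2 := hkey' xm ym
      dsimp only at h1
      nlinarith
  have hPbddAbove : BddAbove Pset := by
    obtain ⟨e0, he0⟩ := hDne
    exact ⟨e0, fun ρ hρ => weak ρ hρ e0 he0⟩
  refine le_antisymm ?_ ?_
  · exact csSup_le ⟨-1, hPne⟩ fun ρ hρ => le_csInf hDne fun e he => weak ρ hρ e he
  · exact le_csSup hPbddAbove hVmem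
end
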